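/- arXiv:2510.02471 — 3 statements merged into one kernel-verified Lean document; each statement's English description precedes it below -/
import Mathlib

section
/- Switch coefficients of scores with memory L: let s : Z^{L+1} → ℝ be a fixed score function, and for a time series Z ∈ Z^{n+1} define S = (S_{L+1},...,S_{n+1}) with S_i = s(Z_i; Z_{i-1},...,Z_{i-L}). Then for all k ∈ [n-L+1] and τ ∈ {L,...,n-L}, Ψ_{k,τ}(S) ≤ Ψ_{k+L, τ-L}(Z), and consequently Ψ̄_τ(S) ≤ ((n+1)/(n-L+1))·Ψ̄_{τ-L}(Z). -/
open MeasureTheory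
open scoped ENNReal

/-- The `j`-th order statistic (1-indexed) of a finite real vector. -/
noncomputable def orderStat {m : ℕ} (v : Fin m → ℝ) (j : ℕ) : ℝ :=
  ((List.ofFn v).mergeSort (fun x y => x ≤ y)).getD (j - 1) 0

/-- `Quantile b v` is the `⌈b·m⌉`-th order statistic of `v ∈ ℝ^m`, with the conventions
`Quantile b v = ⊤` if `b > 1` and `Quantile b v = ⊥` if `b ≤ 0`. -/
noncomputable def Quantile {m : ℕ} (b : ℝ) (v : Fin m → ℝ) : EReal :=
  if b > 1 then ⊤ else if b ≤ 0 then ⊥ else ((orderStat v ⌈b * m⌉.toNat : ℝ) : EReal)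

/-- The deletion operator `Δ⁰_{k,τ}` of the paper (with `k` and `τ` counts of entries). -/
def delta0 {α : Type*} (m k τ : ℕ) (w : Fin m → α) : Fin (m - τ) → α :=
  fun i =>
    if i.val < m - τ - k then w ⟨i.val, by have := i.isLt; omega⟩
    else w ⟨i.val + τ, by have := i.isLt; omega⟩

/-- The deletion operator `Δ¹_{k,τ}` of the paper. -/
def delta1 {α : Type*} (m k τ : ℕ) (w : Fin m → α) : Fin (m - τ) → α :=
  fun i =>
    if h : k + τ < m then
      if h2 : i.val < m - τ - k then w ⟨i.val + k + τ, by have := i.isLt; omega⟩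
      else w ⟨i.val - (m - τ - k), by have := i.isLt; omega⟩
    else w ⟨(i.val + k + τ - m) % m, Nat.mod_lt _ (by have := i.isLt; omega)⟩

/-- Total variation distance between the laws of two random elements `U, V` under `P`. -/
noncomputable def dTV {Ω γ : Type*} [MeasurableSpace Ω] [MeasurableSpace γ]
    (P : Measure Ω) (U V : Ω → γ) : ℝ :=
  ⨆ E : {E : Set γ // MeasurableSet E}, |(P (U ⁻¹' E.1)).toReal - (P (V ⁻¹' E.1)).toReal|

/-- The switch coefficient `Ψ_{k,τ}(W)` of a random vector `W` of length `m`. -/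
noncomputable def switchCoef {Ω α : Type*} [MeasurableSpace Ω] [MeasurableSpace α]
    (P : Measure Ω) {m : ℕ} (W : Ω → Fin m → α) (k τ : ℕ) : ℝ :=
  dTV P (fun ω => delta0 m k τ (W ω)) (fun ω => delta1 m k τ (W ω))

/-- The averaged switch coefficient `Ψ̄_τ(W) = (1/m) ∑_{k=1}^m Ψ_{k,τ}(W)`. -/
noncomputable def avgSwitchCoef {Ω α : Type*} [MeasurableSpace Ω] [MeasurableSpace α]
    (P : Measure Ω) {m : ℕ} (W : Ω → Fin m → α) (τ : ℕ) : ℝ :=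
  (∑ k ∈ Finset.Icc 1 m, switchCoef P W k τ) / m

/-- Stationarity of a time series `Z = (Z_1,…,Z_{n+1})`. -/
def Stationary {Ω α : Type*} [MeasurableSpace Ω] [MeasurableSpace α]
    (P : Measure Ω) {n : ℕ} (Z : Ω → Fin (n + 1) → α) : Prop :=
  ∀ (ℓ i : ℕ) (h : i + ℓ ≤ n + 1),
    Measure.map (fun ω (j : Fin ℓ) => Z ω ⟨i + j.val, by have := j.isLt; omega⟩) P =
      Measure.map (fun ω (j : Fin ℓ) => Z ω ⟨j.val, by have := j.isLt; omega⟩) P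

/-- Exchangeability of a random vector. -/
def Exchangeable {Ω α : Type*} [MeasurableSpace Ω] [MeasurableSpace α]
    (P : Measure Ω) {n : ℕ} (Z : Ω → Fin (n + 1) → α) : Prop :=
  ∀ σ : Equiv.Perm (Fin (n + 1)),
    Measure.map (fun ω => Z ω ∘ σ) P = Measure.map Z P

/-- The β-mixing coefficient with lag `τ` of `Z`, defined via an independent copy `Z'`. -/
noncomputable def betaMix {Ω α : Type*} [MeasurableSpace Ω] [MeasurableSpace α]
    (P : Measure Ω) (n : ℕ) (Z Z' : Ω → Fin (n + 1) → α) (τ : ℕ) : ℝ :=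
  ⨆ k : Fin (n - τ),
    dTV P
      (fun ω (i : Fin (n + 1 - τ)) =>
        if i.val < k.val + 1 then Z ω ⟨i.val, by have := i.isLt; omega⟩
        else Z ω ⟨i.val + τ, by have := i.isLt; omega⟩)
      (fun ω (i : Fin (n + 1 - τ)) =>
        if i.val < k.val + 1 then Z ω ⟨i.val, by have := i.isLt; omega⟩
        else Z' ω ⟨i.val + τ, by have := i.isLt; omega⟩)

section AuxTV
variable {Ω γ δ : Type*} [MeasurableSpace Ω] [MeasurableSpace γ] [MeasurableSpace δ]
variable (P : Measure Ω) [IsProbabilityMeasure P]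

lemma my_abs_le (A B : Set Ω) : |(P A).toReal - (P B).toReal| ≤ 1 := by
  have hA : (P A).toReal ≤ 1 := by
    rw [show (1:ℝ) = (P Set.univ).toReal by simp]
    exact ENNReal.toReal_mono (measure_ne_top _ _) (measure_mono (Set.subset_univ _))
  have hB : (P B).toReal ≤ 1 := by
    rw [show (1:ℝ) = (P Set.univ).toReal by simp]
    exact ENNReal.toReal_mono (measure_ne_top _ _) (measure_mono (Set.subset_univ _))
  have hA0 : 0 ≤ (P A).toReal := ENNReal.toReal_nonneg
  have hB0 : 0 ≤ (P B).toReal := ENNReal.toReal_nonneg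
  rw [abs_sub_le_iff]; constructor <;> linarith

lemma my_bdd (U V : Ω → γ) : BddAbove (Set.range fun E : {E : Set γ // MeasurableSet E} =>
    |(P (U ⁻¹' E.1)).toReal - (P (V ⁻¹' E.1)).toReal|) := by
  refine ⟨1, ?_⟩
  rintro x ⟨E, rfl⟩
  exact my_abs_le P _ _

lemma my_dTV_nonneg (U V : Ω → γ) : 0 ≤ dTV P U V := by
  have h := le_ciSup (my_bdd P U V) ⟨∅, MeasurableSet.empty⟩
  simp only [Set.preimage_empty, measure_empty] at h
  exact le_trans (by simp) h

lemma my_dTV_comp (U V : Ω → γ) (F : γ → δ) (hF : Measurable F) :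
    dTV P (fun ω => F (U ω)) (fun ω => F (V ω)) ≤ dTV P U V := by
  have : Nonempty {E : Set δ // MeasurableSet E} := ⟨⟨∅, MeasurableSet.empty⟩⟩
  apply ciSup_le
  intro E
  exact le_ciSup (my_bdd P U V) ⟨F ⁻¹' E.1, hF E.2⟩

end AuxTV
/-- The post-processing map turning a deleted data vector into the corresponding
deleted score vector. -/
def Fmap {α : Type*} (n L τ k : ℕ) (s : (Fin (L + 1) → α) → ℝ)
    (w : Fin (n + 1 - (τ - L)) → α) : Fin (n - L + 1 - τ) → ℝ :=
  fun i => s fun l =>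
    w ⟨min ((if i.val < n - L + 1 - τ - k then i.val + L else i.val + 2 * L) - l.val)
          (n - (τ - L)), by have := i.isLt; have := l.isLt; omega⟩

lemma Fmap_meas {α : Type*} [MeasurableSpace α] (n L τ k : ℕ)
    (s : (Fin (L + 1) → α) → ℝ) (hs : Measurable s) :
    Measurable (Fmap n L τ k s) := by
  unfold Fmap
  exact measurable_pi_lambda _ fun i =>
    hs.comp (measurable_pi_lambda _ fun l => measurable_pi_apply _)

lemma delta1_mod {α : Type*} (m k τ : ℕ) (w : Fin m → α) (i : Fin (m - τ)) :
    delta1 m k τ w i = w ⟨(i.val + k + τ) % m, Nat.mod_lt _ (by have := i.isLt; omega)⟩ := by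
  have hi := i.isLt
  unfold delta1
  split_ifs with h h2
  · congr 1
    apply Fin.ext
    simp only
    rw [Nat.mod_eq_of_lt (by omega)]
  · congr 1
    apply Fin.ext
    simp only
    rw [Nat.mod_eq_sub_mod (by omega), Nat.mod_eq_of_lt (by omega)]
    omega
  · congr 1
    apply Fin.ext
    simp only
    rw [Nat.mod_eq_sub_mod (a := i.val + k + τ) (by omega)]

lemma delta0_eq {α : Type*} (m k τ : ℕ) (w : Fin m → α) (i : Fin (m - τ)) :
    delta0 m k τ w i = w ⟨if i.val < m - τ - k then i.val else i.val + τ,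
      by have := i.isLt; split_ifs <;> omega⟩ := by
  unfold delta0
  split_ifs with h
  · rfl
  · rfl

set_option maxHeartbeats 1000000 in
lemma key0 {α : Type*} {n L τ k : ℕ} (hL : L ≤ n) (hτ1 : L ≤ τ) (hτ2 : τ ≤ n - L)
    (hk : k ≤ n - L + 1) (s : (Fin (L + 1) → α) → ℝ) (z : Fin (n + 1) → α) :
    delta0 (n - L + 1) k τ
        (fun j : Fin (n - L + 1) => s fun l : Fin (L + 1) =>
          z ⟨L + j.val - l.val, by have := j.isLt; have := l.isLt; omega⟩)
      = Fmap n L τ k s (delta0 (n + 1) (k + L) (τ - L) z) := by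
  funext i
  have hi := i.isLt
  rw [delta0_eq]
  unfold Fmap
  simp only
  congr 1
  funext l
  have hl := l.isLt
  rw [delta0_eq]
  apply congrArg z
  apply Fin.ext
  simp only
  split_ifs <;> omega

set_option maxHeartbeats 1000000 in
lemma key1 {α : Type*} {n L τ k : ℕ} (hL : L ≤ n) (hτ1 : L ≤ τ) (hτ2 : τ ≤ n - L)
    (hk : k ≤ n - L + 1) (s : (Fin (L + 1) → α) → ℝ) (z : Fin (n + 1) → α) :
    delta1 (n - L + 1) k τ
        (fun j : Fin (n - L + 1) => s fun l : Fin (L + 1) =>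
          z ⟨L + j.val - l.val, by have := j.isLt; have := l.isLt; omega⟩)
      = Fmap n L τ k s (delta1 (n + 1) (k + L) (τ - L) z) := by
  funext i
  have hi := i.isLt
  rw [delta1_mod]
  unfold Fmap
  simp only
  congr 1
  funext l
  have hl := l.isLt
  rw [delta1_mod]
  congr 1
  apply Fin.ext
  simp only
  by_cases hc : i.val < n - L + 1 - τ - k
  · rw [if_pos hc]
    have h1 : min (i.val + L - l.val) (n - (τ - L)) = i.val + L - l.val := by omega
    rw [h1]
    rw [Nat.mod_eq_of_lt (by omega : i.val + k + τ < n - L + 1)]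
    rw [Nat.mod_eq_of_lt (by omega : i.val + L - l.val + (k + L) + (τ - L) < n + 1)]
    omega
  · rw [if_neg hc]
    have h1 : min (i.val + 2 * L - l.val) (n - (τ - L)) = i.val + 2 * L - l.val := by omega
    rw [h1]
    have ht1 : n - L + 1 ≤ i.val + k + τ := by omega
    rw [Nat.mod_eq_sub_mod ht1, Nat.mod_eq_of_lt (by omega)]
    have ht2 : n + 1 ≤ i.val + 2 * L - l.val + (k + L) + (τ - L) := by omega
    rw [Nat.mod_eq_sub_mod ht2, Nat.mod_eq_of_lt (by omega)]
    omega
/-- Proposition 2: switch coefficients of the score process with memory `L` are bounded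
by switch coefficients of the data. -/
theorem stmt9 {Ω α : Type*} [MeasurableSpace Ω] [MeasurableSpace α]
    (P : Measure Ω) [IsProbabilityMeasure P] {n L : ℕ} (hL : L ≤ n)
    (Z : Ω → Fin (n + 1) → α) (hZ : Measurable Z)
    (s : (Fin (L + 1) → α) → ℝ) (hs : Measurable s) :
    (∀ k τ, 1 ≤ k → k ≤ n - L + 1 → L ≤ τ → τ ≤ n - L →
        switchCoef P (fun ω (j : Fin (n - L + 1)) =>
            s fun l : Fin (L + 1) => Z ω ⟨L + j.val - l.val, by have := j.isLt; omega⟩) k τ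
          ≤ switchCoef P Z (k + L) (τ - L)) ∧
      (∀ τ, L ≤ τ → τ ≤ n - L →
        avgSwitchCoef P (fun ω (j : Fin (n - L + 1)) =>
            s fun l : Fin (L + 1) => Z ω ⟨L + j.val - l.val, by have := j.isLt; omega⟩) τ
          ≤ (((n : ℝ) + 1) / ((n : ℝ) - L + 1)) * avgSwitchCoef P Z (τ - L)) := by
  have part1 : ∀ k τ, 1 ≤ k → k ≤ n - L + 1 → L ≤ τ → τ ≤ n - L →
      switchCoef P (fun ω (j : Fin (n - L + 1)) =>
          s fun l : Fin (L + 1) => Z ω ⟨L + j.val - l.val, by have := j.isLt; omega⟩) k τ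
        ≤ switchCoef P Z (k + L) (τ - L) := by
    intro k τ hk1 hk2 hτ1 hτ2
    have comp := my_dTV_comp P (fun ω => delta0 (n + 1) (k + L) (τ - L) (Z ω))
      (fun ω => delta1 (n + 1) (k + L) (τ - L) (Z ω)) (Fmap n L τ k s)
      (Fmap_meas n L τ k s hs)
    refine le_trans (le_of_eq ?_) comp
    unfold switchCoef
    congr 1
    · funext ω
      exact key0 hL hτ1 hτ2 hk2 s (Z ω)
    · funext ω
      exact key1 hL hτ1 hτ2 hk2 s (Z ω)
  refine ⟨part1, ?_⟩
  intro τ hτ1 hτ2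
  show (∑ k ∈ Finset.Icc 1 (n - L + 1), switchCoef P (fun ω (j : Fin (n - L + 1)) =>
        s fun l : Fin (L + 1) => Z ω ⟨L + j.val - l.val, by have := j.isLt; omega⟩) k τ)
        / ((n - L + 1 : ℕ) : ℝ)
      ≤ (((n : ℝ) + 1) / ((n : ℝ) - L + 1)) *
        ((∑ k ∈ Finset.Icc 1 (n + 1), switchCoef P Z k (τ - L)) / ((n + 1 : ℕ) : ℝ))
  have h1 : (∑ k ∈ Finset.Icc 1 (n - L + 1), switchCoef P (fun ω (j : Fin (n - L + 1)) =>
        s fun l : Fin (L + 1) => Z ω ⟨L + j.val - l.val, by have := j.isLt; omega⟩) k τ)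
      ≤ ∑ k ∈ Finset.Icc 1 (n - L + 1), switchCoef P Z (k + L) (τ - L) := by
    refine Finset.sum_le_sum fun k hk => ?_
    have hk' := Finset.mem_Icc.1 hk
    exact part1 k τ hk'.1 hk'.2 hτ1 hτ2
  have h2 : (∑ k ∈ Finset.Icc 1 (n - L + 1), switchCoef P Z (k + L) (τ - L))
      = ∑ j ∈ Finset.Icc (1 + L) (n - L + 1 + L), switchCoef P Z j (τ - L) := by
    rw [← Finset.map_add_right_Icc, Finset.sum_map]
    rfl
  have h3 : (∑ j ∈ Finset.Icc (1 + L) (n - L + 1 + L), switchCoef P Z j (τ - L))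
      ≤ ∑ j ∈ Finset.Icc 1 (n + 1), switchCoef P Z j (τ - L) := by
    refine Finset.sum_le_sum_of_subset_of_nonneg ?_ fun j _ _ => my_dTV_nonneg P _ _
    intro x hx
    simp only [Finset.mem_Icc] at hx ⊢
    omega
  have hAB : (∑ k ∈ Finset.Icc 1 (n - L + 1), switchCoef P (fun ω (j : Fin (n - L + 1)) =>
        s fun l : Fin (L + 1) => Z ω ⟨L + j.val - l.val, by have := j.isLt; omega⟩) k τ)
      ≤ ∑ k ∈ Finset.Icc 1 (n + 1), switchCoef P Z k (τ - L) := h1.trans (h2 ▸ h3)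
  have hc1 : ((n - L + 1 : ℕ) : ℝ) = (n : ℝ) - (L : ℝ) + 1 := by
    push_cast [hL]
    ring
  have hc2 : ((n + 1 : ℕ) : ℝ) = (n : ℝ) + 1 := by push_cast; ring
  have hne1 : (n : ℝ) + 1 ≠ 0 := by positivity
  have hpos2 : (0 : ℝ) < (n : ℝ) - (L : ℝ) + 1 := by
    rw [← hc1]
    exact_mod_cast Nat.succ_pos _
  rw [hc1, hc2]
  rw [show ((n : ℝ) + 1) / ((n : ℝ) - L + 1) *
      ((∑ k ∈ Finset.Icc 1 (n + 1), switchCoef P Z k (τ - L)) / ((n : ℝ) + 1))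
      = (∑ k ∈ Finset.Icc 1 (n + 1), switchCoef P Z k (τ - L)) / ((n : ℝ) - L + 1) by
    field_simp]
  gcongr
end

section
/- One-step coverage comparison: let S = (S_{L+1},...,S_{n+1}) be a random vector of real scores, fix τ ∈ {0,...,n-L} and α ∈ (0,1). Then for every i ∈ {L+1,...,n+1}, P(S_{n+1} ≤ Quantile_{1-α}(S)) ≥ P(S_i ≤ Quantile_{1-α-τ/(n-L+1)}(S)) − Ψ_{i-L,τ}(S). -/
open MeasureTheory
open scoped ENNReal

theorem countP_finRange {m : ℕ} (p : Fin m → Prop) [DecidablePred p] :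
    (List.finRange m).countP (fun i => decide (p i)) = (Finset.univ.filter p).card := by
  rw [List.countP_eq_length_filter, Finset.card, Finset.filter_val, Fin.univ_def]
  simp

theorem le_orderStat_iff {m : ℕ} (v : Fin m → ℝ) (j : ℕ) (hj1 : 1 ≤ j) (hjm : j ≤ m) (x : ℝ) :
    x ≤ orderStat v j ↔ (Finset.univ.filter (fun i => v i < x)).card ≤ j - 1 := by
  set l := (List.ofFn v).mergeSort (fun x y => decide (x ≤ y)) with hl
  have hlen : l.length = m := by rw [hl, List.length_mergeSort, List.length_ofFn]
  have hperm : l.Perm (List.ofFn v) := List.mergeSort_perm _ _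
  have hsort : ∀ (a b : ℕ) (ha : a < l.length) (hb : b < l.length), a ≤ b → l[a] ≤ l[b] := by
    have h := List.pairwise_mergeSort (le := fun a b : ℝ => decide (a ≤ b))
      (fun a b c hab hbc => decide_eq_true (le_trans (of_decide_eq_true hab) (of_decide_eq_true hbc)))
      (fun a b => by simpa [Bool.or_eq_true, decide_eq_true_eq] using le_total a b)
      (List.ofFn v)
    rw [List.pairwise_iff_getElem] at h
    intro a b ha hb hab
    rcases eq_or_lt_of_le hab with rfl | hlt
    · exact le_refl _
    · exact of_decide_eq_true (h a b ha hb hlt)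
  have hcount : l.countP (fun y => decide (y < x)) = (Finset.univ.filter (fun i => v i < x)).card := by
    rw [hperm.countP_eq, List.ofFn_eq_map, List.countP_map, ← countP_finRange (fun i => v i < x)]
    rfl
  have hjlt : j - 1 < l.length := by omega
  have hgetD : orderStat v j = l[j-1] := List.getD_eq_getElem l 0 hjlt
  rw [hgetD, ← hcount]
  constructor
  · intro hx
    have hdecomp : l.countP (fun y => decide (y < x)) =
        (l.take (j-1)).countP (fun y => decide (y < x)) + (l.drop (j-1)).countP (fun y => decide (y < x)) := by
      conv_lhs => rw [← List.take_append_drop (j-1) l]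
      rw [List.countP_append]
    have h1 : (l.take (j-1)).countP (fun y => decide (y < x)) ≤ j - 1 :=
      le_trans List.countP_le_length (by rw [List.length_take]; omega)
    have h2 : (l.drop (j-1)).countP (fun y => decide (y < x)) = 0 := by
      rw [List.countP_eq_zero]
      intro a ha
      rw [List.mem_iff_getElem] at ha
      obtain ⟨t, ht, rfl⟩ := ha
      rw [List.getElem_drop]
      simp only [decide_eq_true_eq, not_lt]
      exact le_trans hx (hsort (j-1) (j-1+t) hjlt (by rw [List.length_drop] at ht; omega) (by omega))
    omega
  · intro hc
    by_contra hlt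
    push_neg at hlt
    have hall : (l.take j).countP (fun y => decide (y < x)) = j := by
      have hlen' : (l.take j).length = j := by rw [List.length_take]; omega
      have heq : (l.take j).countP (fun y => decide (y < x)) = (l.take j).length := by
        rw [List.countP_eq_length]
        intro a ha
        rw [List.mem_iff_getElem] at ha
        obtain ⟨t, ht, rfl⟩ := ha
        rw [List.getElem_take]
        exact decide_eq_true (lt_of_le_of_lt (hsort t (j-1) (by omega) hjlt (by rw [hlen'] at ht; omega)) hlt)
      rw [heq, hlen']
    have hdecomp : l.countP (fun y => decide (y < x)) =
        (l.take j).countP (fun y => decide (y < x)) + (l.drop j).countP (fun y => decide (y < x)) := by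
      conv_lhs => rw [← List.take_append_drop j l]
      rw [List.countP_append]
    omega

theorem Ncard_comp_le {a b : ℕ} (v : Fin b → ℝ) (ι : Fin a → Fin b)
    (hι : Function.Injective ι) (x : ℝ) :
    (Finset.univ.filter (fun i => v (ι i) < x)).card ≤ (Finset.univ.filter (fun i => v i < x)).card := by
  apply Finset.card_le_card_of_injOn ι
  · intro i hi
    simp only [Finset.coe_filter, Finset.mem_coe, Finset.mem_filter, Finset.mem_univ, true_and, Set.mem_setOf_eq] at *
    exact hi
  · exact hι.injOn

theorem Ncard_le_comp {a b : ℕ} (v : Fin b → ℝ) (ι : Fin a → Fin b)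
    (hι : Function.Injective ι) (x : ℝ) :
    (Finset.univ.filter (fun i => v i < x)).card ≤
      (Finset.univ.filter (fun i => v (ι i) < x)).card + (b - a) := by
  classical
  set f := Finset.univ.filter (fun i : Fin b => v i < x) with hf
  set im := Finset.univ.image ι with him
  have h1 : f ⊆ (f ∩ im) ∪ (f \ im) := by
    intro i hi
    by_cases h : i ∈ im
    · exact Finset.mem_union_left _ (Finset.mem_inter.mpr ⟨hi, h⟩)
    · exact Finset.mem_union_right _ (Finset.mem_sdiff.mpr ⟨hi, h⟩)
  have h2 : (f ∩ im).card ≤ (Finset.univ.filter (fun i => v (ι i) < x)).card := by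
    have hsub : f ∩ im ⊆ (Finset.univ.filter (fun i => v (ι i) < x)).image ι := by
      intro i hi
      obtain ⟨hif, hiim⟩ := Finset.mem_inter.mp hi
      obtain ⟨j, _, rfl⟩ := Finset.mem_image.mp hiim
      refine Finset.mem_image.mpr ⟨j, ?_, rfl⟩
      simp only [hf, Finset.mem_filter, Finset.mem_univ, true_and] at hif ⊢
      exact hif
    calc (f ∩ im).card ≤ ((Finset.univ.filter (fun i => v (ι i) < x)).image ι).card :=
          Finset.card_le_card hsub
      _ = (Finset.univ.filter (fun i => v (ι i) < x)).card :=
          Finset.card_image_of_injective _ hι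
  have h3 : (f \ im).card ≤ b - a := by
    calc (f \ im).card ≤ (Finset.univ \ im).card :=
          Finset.card_le_card (Finset.sdiff_subset_sdiff (Finset.subset_univ f) le_rfl)
      _ = b - a := by
          rw [Finset.card_sdiff_of_subset (Finset.subset_univ im), Finset.card_univ, Fintype.card_fin,
            him, Finset.card_image_of_injective _ hι, Finset.card_univ, Fintype.card_fin]
  calc f.card ≤ ((f ∩ im) ∪ (f \ im)).card := Finset.card_le_card h1
    _ ≤ (f ∩ im).card + (f \ im).card := Finset.card_union_le _ _
    _ ≤ (Finset.univ.filter (fun i => v (ι i) < x)).card + (b - a) := by omega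

theorem delta0_repr {α : Type*} (m k τ : ℕ) :
    ∃ ι : Fin (m - τ) → Fin m, Function.Injective ι ∧
      ∀ w : Fin m → α, delta0 m k τ w = w ∘ ι := by
  refine ⟨fun i => if h : i.val < m - τ - k then ⟨i.val, by have := i.isLt; omega⟩
    else ⟨i.val + τ, by have := i.isLt; omega⟩, ?_, ?_⟩
  · intro i j hij
    simp only at hij
    have hi := i.isLt; have hj := j.isLt
    apply Fin.ext
    split_ifs at hij with h1 h2 h2 <;> simp only [Fin.mk.injEq] at hij <;> omega
  · intro w
    funext i
    simp only [delta0, Function.comp]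
    split_ifs with h <;> rfl

theorem delta1_repr {α : Type*} (m k τ : ℕ) (hk : k ≤ m) :
    ∃ ι : Fin (m - τ) → Fin m, Function.Injective ι ∧
      ∀ w : Fin m → α, delta1 m k τ w = w ∘ ι := by
  refine ⟨fun i => if h : k + τ < m then
      (if h2 : i.val < m - τ - k then ⟨i.val + k + τ, by have := i.isLt; omega⟩
       else ⟨i.val - (m - τ - k), by have := i.isLt; omega⟩)
    else ⟨(i.val + k + τ - m) % m, Nat.mod_lt _ (by have := i.isLt; omega)⟩, ?_, ?_⟩
  · intro i j hij
    simp only at hij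
    have hi := i.isLt; have hj := j.isLt
    apply Fin.ext
    by_cases h : k + τ < m
    · rw [dif_pos h, dif_pos h] at hij
      split_ifs at hij with h1 h2 h2 <;> simp only [Fin.mk.injEq] at hij <;> omega
    · rw [dif_neg h, dif_neg h] at hij
      simp only [Fin.mk.injEq] at hij
      rw [Nat.mod_eq_of_lt (by omega), Nat.mod_eq_of_lt (by omega)] at hij
      omega
  · intro w
    funext i
    simp only [delta1, Function.comp]
    split_ifs with h h2 <;> rfl

theorem delta0_last {α : Type*} (m k τ : ℕ) (hk1 : 1 ≤ k) (hτ : τ < m) (w : Fin m → α) :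
    delta0 m k τ w ⟨m - τ - 1, by omega⟩ = w ⟨m - 1, by omega⟩ := by
  simp only [delta0]
  rw [if_neg (by omega)]
  congr 1
  exact Fin.ext (by simp; omega)

theorem delta1_last {α : Type*} (m k τ : ℕ) (hk1 : 1 ≤ k) (hk : k ≤ m) (hτ : τ < m)
    (w : Fin m → α) :
    delta1 m k τ w ⟨m - τ - 1, by omega⟩ = w ⟨k - 1, by omega⟩ := by
  simp only [delta1]
  by_cases h : k + τ < m
  · rw [dif_pos h, dif_neg (by omega)]
    congr 1
    exact Fin.ext (by simp; omega)
  · rw [dif_neg h]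
    congr 1
    apply Fin.ext
    simp only
    rw [Nat.mod_eq_of_lt (by omega)]
    omega

theorem dTV_ge {Ω γ : Type*} [MeasurableSpace Ω] [MeasurableSpace γ]
    (P : MeasureTheory.Measure Ω) [MeasureTheory.IsProbabilityMeasure P] (U V : Ω → γ)
    (E : Set γ) (hE : MeasurableSet E) :
    (P (V ⁻¹' E)).toReal - (P (U ⁻¹' E)).toReal ≤ dTV P U V := by
  have hb : BddAbove (Set.range fun E : {E : Set γ // MeasurableSet E} =>
      |(P (U ⁻¹' E.1)).toReal - (P (V ⁻¹' E.1)).toReal|) := by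
    refine ⟨1, ?_⟩
    rintro x ⟨E', rfl⟩
    have h1 : (P (U ⁻¹' E'.1)).toReal ≤ 1 := by
      simpa using ENNReal.toReal_mono ENNReal.one_ne_top MeasureTheory.prob_le_one
    have h2 : (P (V ⁻¹' E'.1)).toReal ≤ 1 := by
      simpa using ENNReal.toReal_mono ENNReal.one_ne_top MeasureTheory.prob_le_one
    have h3 : 0 ≤ (P (U ⁻¹' E'.1)).toReal := ENNReal.toReal_nonneg
    have h4 : 0 ≤ (P (V ⁻¹' E'.1)).toReal := ENNReal.toReal_nonneg
    rw [abs_sub_le_iff]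
    constructor <;> linarith
  calc (P (V ⁻¹' E)).toReal - (P (U ⁻¹' E)).toReal
      ≤ |(P (U ⁻¹' E)).toReal - (P (V ⁻¹' E)).toReal| := by
        rw [abs_sub_comm]; exact le_abs_self _
    _ ≤ dTV P U V := le_ciSup hb ⟨E, hE⟩

theorem measurable_Eset (a : ℕ) (j0 : Fin a) (r : ℕ) :
    MeasurableSet {w : Fin a → ℝ | (Finset.univ.filter (fun i => w i < w j0)).card ≤ r} := by
  have hm : Measurable (fun w : Fin a → ℝ => (Finset.univ.filter (fun i => w i < w j0)).card) := by
    have heq : (fun w : Fin a → ℝ => (Finset.univ.filter (fun i => w i < w j0)).card)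
        = fun w => ∑ i : Fin a, if w i < w j0 then 1 else 0 := by
      funext w; rw [Finset.card_filter]
    rw [heq]
    exact Finset.measurable_sum _ (fun i _ => Measurable.ite
      (measurableSet_lt (measurable_pi_apply i) (measurable_pi_apply j0))
      measurable_const measurable_const)
  have : {w : Fin a → ℝ | (Finset.univ.filter (fun i => w i < w j0)).card ≤ r}
      = (fun w : Fin a → ℝ => (Finset.univ.filter (fun i => w i < w j0)).card) ⁻¹' {t | t ≤ r} := rfl
  rw [this]
  exact hm (by trivial)

set_option maxHeartbeats 4000000 in
/-- One-step coverage comparison (inequality (8) in the proof of Theorem 1). -/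

theorem stmt10 {Ω : Type*} [MeasurableSpace Ω] (P : Measure Ω) [IsProbabilityMeasure P]
    {n L : ℕ} (hL : L ≤ n) (S : Ω → Fin (n - L + 1) → ℝ) (hS : Measurable S)
    (τ : ℕ) (hτ : τ ≤ n - L) (α : ℝ) (hα : 0 < α) (hα1 : α < 1)
    (i : ℕ) (hi : L + 1 ≤ i) (hi' : i ≤ n + 1) :
    (P {ω | (S ω (Fin.last (n - L)) : EReal) ≤ Quantile (1 - α) (S ω)}).toReal
      ≥ (P {ω | (S ω ⟨i - L - 1, by omega⟩ : EReal)
            ≤ Quantile (1 - α - (τ : ℝ) / ((n : ℝ) - L + 1)) (S ω)}).toReal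
        - switchCoef P S (i - L) τ := by
  classical
  have hmpos : 0 < n - L + 1 := by omega
  have hτm : τ < n - L + 1 := by omega
  have hc : ((n - L + 1 : ℕ) : ℝ) = (n : ℝ) - L + 1 := by
    push_cast [Nat.cast_sub hL]; ring
  have hcpos : (0 : ℝ) < ((n - L + 1 : ℕ) : ℝ) := by exact_mod_cast hmpos
  set b2 : ℝ := 1 - α - (τ : ℝ) / ((n : ℝ) - L + 1) with hb2def
  have hswitch_nonneg : 0 ≤ switchCoef P S (i - L) τ :=
    Real.iSup_nonneg (fun _ => abs_nonneg _)
  by_cases hpos : b2 ≤ 0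
  · -- degenerate case: the RHS quantile is ⊥ and the RHS event is empty
    have hq : ∀ ω, Quantile b2 (S ω) = (⊥ : EReal) := by
      intro ω
      rw [Quantile, if_neg (by linarith), if_pos hpos]
    have hempty : {ω | (S ω ⟨i - L - 1, by omega⟩ : EReal) ≤ Quantile b2 (S ω)} = ∅ := by
      ext ω
      simp only [Set.mem_setOf_eq, hq ω, le_bot_iff, Set.mem_empty_iff_false, iff_false]
      exact fun h => EReal.coe_ne_bot _ h
    rw [hempty]
    simp only [measure_empty, ENNReal.toReal_zero]
    have := ENNReal.toReal_nonneg
      (a := P {ω | (S ω (Fin.last (n - L)) : EReal) ≤ Quantile (1 - α) (S ω)})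
    linarith
  · push_neg at hpos
    have hb2lt : b2 < 1 := by
      have hτnn : (0:ℝ) ≤ (τ : ℝ) / ((n : ℝ) - L + 1) := by
        apply div_nonneg (Nat.cast_nonneg _)
        rw [← hc]; positivity
      simp only [hb2def]; linarith
    set k : ℕ := i - L with hk
    have hk1 : 1 ≤ k := by omega
    have hkm : k ≤ n - L + 1 := by omega
    have hb2m : b2 * ((n - L + 1 : ℕ) : ℝ) = (1 - α) * ((n - L + 1 : ℕ) : ℝ) - (τ : ℝ) := by
      have hc0 : (n : ℝ) - L + 1 ≠ 0 := by rw [← hc]; positivity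
      rw [hb2def, hc, sub_mul, div_mul_cancel₀ _ hc0]
    have hτQ : (τ : ℝ) < (1 - α) * ((n - L + 1 : ℕ) : ℝ) := by
      nlinarith [mul_pos hpos hcpos]
    set Q : ℤ := ⌈(1 - α) * ((n - L + 1 : ℕ) : ℝ)⌉ with hQ
    have hQτ : (τ : ℤ) < Q := by
      rw [hQ, Int.lt_ceil]
      exact_mod_cast hτQ
    have hQm : Q ≤ ((n - L + 1 : ℕ) : ℤ) := by
      rw [hQ, Int.ceil_le]
      have : (1 - α) * ((n - L + 1 : ℕ) : ℝ) ≤ ((n - L + 1 : ℕ) : ℝ) := by nlinarith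
      exact_mod_cast this
    set qn : ℕ := Q.toNat with hqn
    have hqn1 : τ + 1 ≤ qn := by omega
    have hqnm : qn ≤ n - L + 1 := by omega
    set rn : ℕ := qn - τ with hrn
    have hrn1 : 1 ≤ rn := by omega
    have hrnm : rn ≤ n - L + 1 := by omega
    have hceil2 : (⌈b2 * ((n - L + 1 : ℕ) : ℝ)⌉ : ℤ).toNat = rn := by
      rw [hb2m, Int.ceil_sub_natCast]
      omega
    have hquant1 : ∀ v : Fin (n - L + 1) → ℝ,
        Quantile (1 - α) v = ((orderStat v qn : ℝ) : EReal) := by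
      intro v
      rw [Quantile, if_neg (by linarith), if_neg (by linarith)]
    have hquant2 : ∀ v : Fin (n - L + 1) → ℝ,
        Quantile b2 v = ((orderStat v rn : ℝ) : EReal) := by
      intro v
      rw [Quantile, if_neg (by linarith), if_neg (by linarith), hceil2]
    have hlastlt : n - L + 1 - τ - 1 < n - L + 1 - τ := by omega
    set jlast : Fin (n - L + 1 - τ) := ⟨n - L + 1 - τ - 1, hlastlt⟩ with hjlast
    set E : Set (Fin (n - L + 1 - τ) → ℝ) :=
      {w | (Finset.univ.filter (fun j => w j < w jlast)).card ≤ rn - 1} with hE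
    have hEmeas : MeasurableSet E := measurable_Eset (n - L + 1 - τ) jlast (rn - 1)
    obtain ⟨ι0, hι0inj, hι0⟩ := delta0_repr (α := ℝ) (n - L + 1) k τ
    obtain ⟨ι1, hι1inj, hι1⟩ := delta1_repr (α := ℝ) (n - L + 1) k τ hkm
    -- inclusion 1
    have hsub1 : (fun ω => delta0 (n - L + 1) k τ (S ω)) ⁻¹' E ⊆
        {ω | (S ω (Fin.last (n - L)) : EReal) ≤ Quantile (1 - α) (S ω)} := by
      intro ω hω
      simp only [Set.mem_preimage, hE, Set.mem_setOf_eq] at hω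
      have hlast0 : delta0 (n - L + 1) k τ (S ω) jlast = S ω ⟨n - L + 1 - 1, by omega⟩ :=
        delta0_last (n - L + 1) k τ hk1 hτm (S ω)
      have hlastfin : (⟨n - L + 1 - 1, by omega⟩ : Fin (n - L + 1)) = Fin.last (n - L) := by
        apply Fin.ext
        simp only [Fin.val_last]
        omega
      rw [hι0 (S ω)] at hω hlast0
      rw [hlast0, hlastfin] at hω
      simp only [Function.comp] at hω
      have hcount : (Finset.univ.filter
          (fun j : Fin (n - L + 1) => S ω j < S ω (Fin.last (n - L)))).card ≤ qn - 1 := by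
        have h1 := Ncard_le_comp (S ω) ι0 hι0inj (S ω (Fin.last (n - L)))
        have h2 : n - L + 1 - (n - L + 1 - τ) = τ := by omega
        rw [h2] at h1
        omega
      have hfin := (le_orderStat_iff (S ω) qn (by omega) hqnm
        (S ω (Fin.last (n - L)))).mpr hcount
      simp only [Set.mem_setOf_eq, hquant1 (S ω)]
      exact_mod_cast hfin
    -- inclusion 2
    have hsub2 : {ω | (S ω ⟨i - L - 1, by omega⟩ : EReal) ≤ Quantile b2 (S ω)} ⊆
        (fun ω => delta1 (n - L + 1) k τ (S ω)) ⁻¹' E := by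
      intro ω hω
      simp only [Set.mem_setOf_eq, hquant2 (S ω), EReal.coe_le_coe_iff] at hω
      have hcount := (le_orderStat_iff (S ω) rn hrn1 hrnm
        (S ω ⟨i - L - 1, by omega⟩)).mp hω
      simp only [Set.mem_preimage, hE, Set.mem_setOf_eq]
      have hlast1 : delta1 (n - L + 1) k τ (S ω) jlast = S ω ⟨k - 1, by omega⟩ :=
        delta1_last (n - L + 1) k τ hk1 hkm hτm (S ω)
      have hidx : (⟨k - 1, by omega⟩ : Fin (n - L + 1)) = ⟨i - L - 1, by omega⟩ :=
        Fin.ext (by simp [hk])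
      rw [hι1 (S ω)] at hlast1
      rw [hι1 (S ω)]
      rw [hlast1, hidx]
      simp only [Function.comp]
      calc (Finset.univ.filter (fun j => S ω (ι1 j) < S ω ⟨i - L - 1, by omega⟩)).card
          ≤ (Finset.univ.filter
              (fun j : Fin (n - L + 1) => S ω j < S ω ⟨i - L - 1, by omega⟩)).card :=
            Ncard_comp_le (S ω) ι1 hι1inj _
        _ ≤ rn - 1 := hcount
    -- probability comparison
    have hP1 : (P ((fun ω => delta0 (n - L + 1) k τ (S ω)) ⁻¹' E)).toReal
        ≤ (P {ω | (S ω (Fin.last (n - L)) : EReal) ≤ Quantile (1 - α) (S ω)}).toReal :=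
      ENNReal.toReal_mono (measure_ne_top _ _) (measure_mono hsub1)
    have hP2 : (P {ω | (S ω ⟨i - L - 1, by omega⟩ : EReal) ≤ Quantile b2 (S ω)}).toReal
        ≤ (P ((fun ω => delta1 (n - L + 1) k τ (S ω)) ⁻¹' E)).toReal :=
      ENNReal.toReal_mono (measure_ne_top _ _) (measure_mono hsub2)
    have hdtv : (P ((fun ω => delta1 (n - L + 1) k τ (S ω)) ⁻¹' E)).toReal
        - (P ((fun ω => delta0 (n - L + 1) k τ (S ω)) ⁻¹' E)).toReal ≤ switchCoef P S k τ :=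
      dTV_ge P _ _ E hEmeas
    rw [ge_iff_le]
    have hkk : switchCoef P S k τ = switchCoef P S (i - L) τ := by rw [hk]
    linarith
end

section
/- Overcoverage upper bound: in the setting of the pretrained coverage theorem, assume the scores S_{L+1},...,S_{n+1} are almost surely distinct. Then P(S_{n+1} ≤ Quantile_{(1-α)(1+1/(n-L))}(S_{L+1},...,S_n)) ≤ ⌈(1-α)(n-L+1)⌉/(n-L+1) + min_{τ ∈ {0,...,n-L}} { τ/(n-L+1) + Ψ̄_τ(S) }. -/
open MeasureTheory
open scoped ENNReal

open Finset

def iota0 (m k τ : ℕ) : Fin (m - τ) → Fin m :=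
  fun i =>
    if i.val < m - τ - k then ⟨i.val, by have := i.isLt; omega⟩
    else ⟨i.val + τ, by have := i.isLt; omega⟩

def iota1 (m k τ : ℕ) : Fin (m - τ) → Fin m :=
  fun i =>
    if h : k + τ < m then
      if h2 : i.val < m - τ - k then ⟨i.val + k + τ, by have := i.isLt; omega⟩
      else ⟨i.val - (m - τ - k), by have := i.isLt; omega⟩
    else ⟨(i.val + k + τ - m) % m, Nat.mod_lt _ (by have := i.isLt; omega)⟩

lemma delta0_eq_s13 {α : Type*} (m k τ : ℕ) (w : Fin m → α) : delta0 m k τ w = w ∘ iota0 m k τ := by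
  funext i
  by_cases h : i.val < m - τ - k <;> simp [delta0, iota0, h]

lemma delta1_eq {α : Type*} (m k τ : ℕ) (w : Fin m → α) : delta1 m k τ w = w ∘ iota1 m k τ := by
  funext i
  by_cases h : k + τ < m
  · by_cases h2 : i.val < m - τ - k <;> simp [delta1, iota1, h, h2]
  · simp [delta1, iota1, h]

lemma iota0_inj (m k τ : ℕ) : Function.Injective (iota0 m k τ) := by
  intro i j hij
  have hi := i.isLt; have hj := j.isLt
  rw [Fin.ext_iff] at hij ⊢
  unfold iota0 at hij
  split at hij <;> split at hij <;> simp_all <;> omega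

lemma iota1_inj (m k τ : ℕ) (hk : k ≤ m) : Function.Injective (iota1 m k τ) := by
  intro i j hij
  have hi := i.isLt; have hj := j.isLt
  rw [Fin.ext_iff] at hij ⊢
  unfold iota1 at hij
  split at hij
  · rename_i h
    split at hij <;> split at hij <;> simp_all <;> omega
  · rename_i h
    simp only at hij
    rw [Nat.mod_eq_of_lt (by omega), Nat.mod_eq_of_lt (by omega)] at hij
    omega

lemma iota0_last (m k τ : ℕ) (hk : 1 ≤ k) (hτ : τ + 1 ≤ m) :
    iota0 m k τ ⟨m - τ - 1, by omega⟩ = ⟨m - 1, by omega⟩ := by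
  apply Fin.ext
  simp only [iota0]
  rw [if_neg (by omega)]
  simp only [Fin.val_mk]
  omega

lemma iota1_last (m k τ : ℕ) (hk : 1 ≤ k) (hk2 : k ≤ m) (hτ : τ + 1 ≤ m) :
    iota1 m k τ ⟨m - τ - 1, by omega⟩ = ⟨k - 1, by omega⟩ := by
  apply Fin.ext
  simp only [iota1]
  by_cases h : k + τ < m
  · rw [dif_pos h, dif_neg (by omega)]
    simp only [Fin.val_mk]
    omega
  · rw [dif_neg h]
    simp only [Fin.val_mk]
    rw [Nat.mod_eq_of_lt (by omega)]
    omega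

lemma sorted_countP_le {l : List ℝ} (hl : List.Pairwise (· ≤ ·) l) {i : ℕ} (hi : i < l.length)
    {x : ℝ} (hx : x ≤ l.get ⟨i, hi⟩) : l.countP (fun y => decide (y < x)) ≤ i := by
  have h1 : l = l.take i ++ l.drop i := (List.take_append_drop i l).symm
  have hdrop : (l.drop i).countP (fun y => decide (y < x)) = 0 := by
    rw [List.countP_eq_zero]
    intro y hy
    simp only [decide_eq_true_eq, not_lt]
    have hd : l.drop i = l[i] :: l.drop (i+1) := List.drop_eq_getElem_cons hi
    rw [hd] at hy
    rcases List.mem_cons.mp hy with rfl | hy'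
    · exact hx
    · refine le_trans hx ?_
      have hs : List.Pairwise (· ≤ ·) (l[i] :: l.drop (i+1)) := by
        rw [← hd]; exact hl.drop
      exact List.rel_of_pairwise_cons hs hy'
  calc l.countP (fun y => decide (y < x))
      = (l.take i).countP _ + (l.drop i).countP _ := by
        conv_lhs => rw [h1]
        exact List.countP_append
    _ ≤ i := by
        rw [hdrop, add_zero]
        exact le_trans List.countP_le_length (by simp)

lemma card_lt_of_le_orderStat {N r : ℕ} {v : Fin N → ℝ} (hr1 : 1 ≤ r) (hrN : r ≤ N)
    {x : ℝ} (hx : x ≤ orderStat v r) :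
    (Finset.univ.filter (fun j => v j < x)).card < r := by
  set l := (List.ofFn v).mergeSort (fun x y => x ≤ y) with hl
  have hlen : l.length = N := by simp [hl]
  have hsorted : List.Pairwise (· ≤ ·) l := List.pairwise_mergeSort' (r := fun x y : ℝ => x ≤ y) (List.ofFn v)
  have hiN : r - 1 < l.length := by omega
  have hx' : x ≤ l.get ⟨r - 1, hiN⟩ := by
    rw [orderStat] at hx
    rwa [List.getD_eq_getElem _ _ hiN] at hx
  have h2 := sorted_countP_le hsorted hiN hx'
  have h3 : l.countP (fun y => decide (y < x)) = (Finset.univ.filter (fun j => v j < x)).card := by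
    rw [List.Perm.countP_eq _ (List.mergeSort_perm _ _)]
    rw [List.ofFn_eq_map, List.countP_map]
    show List.countP (fun i => decide (v i < x)) _ = _
    rw [List.countP_eq_length_filter]
    rfl
  omega

lemma cardA {p m : ℕ} (ι : Fin p → Fin m) (hι : Function.Injective ι) (w : Fin m → ℝ) (x : ℝ) :
    (univ.filter (fun i => w (ι i) ≤ x)).card ≤ (univ.filter (fun j => w j ≤ x)).card := by
  refine Finset.card_le_card_of_injOn ι ?_ hι.injOn
  intro i hi
  simp only [Finset.mem_coe, mem_filter, mem_univ, true_and] at hi ⊢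
  exact hi

lemma cardB {p m : ℕ} (ι : Fin p → Fin m) (hι : Function.Injective ι) (w : Fin m → ℝ) (x : ℝ) :
    (univ.filter (fun j => w j ≤ x)).card ≤ (univ.filter (fun i => w (ι i) ≤ x)).card + (m - p) := by
  classical
  set A := univ.filter (fun j : Fin m => w j ≤ x) with hA
  set I := (univ : Finset (Fin p)).image ι with hI
  have hIcard : I.card = p := by
    rw [hI, Finset.card_image_of_injective _ hι, Finset.card_univ, Fintype.card_fin]
  have h1 : (A ∩ I).card + (A \ I).card = A.card := Finset.card_inter_add_card_sdiff A I
  have h2 : (A ∩ I).card ≤ (univ.filter (fun i => w (ι i) ≤ x)).card := by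
    have hsub : A ∩ I ⊆ (univ.filter (fun i : Fin p => w (ι i) ≤ x)).image ι := by
      intro j hj
      simp only [hA, hI, Finset.mem_inter, mem_filter, mem_univ, true_and, Finset.mem_image] at hj ⊢
      obtain ⟨hwj, i, hi⟩ := hj
      exact ⟨i, by rw [hi]; exact hwj, hi⟩
    exact le_trans (Finset.card_le_card hsub) (Finset.card_image_le)
  have h3 : (A \ I).card ≤ m - p := by
    have : A \ I ⊆ univ \ I := Finset.sdiff_subset_sdiff (Finset.subset_univ _) le_rfl
    refine le_trans (Finset.card_le_card this) ?_
    rw [Finset.card_sdiff_of_subset (Finset.subset_univ _), Finset.card_univ, Fintype.card_fin, hIcard]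
  omega

lemma cnt_lt_cnt {m : ℕ} {w : Fin m → ℝ} {j j' : Fin m} (h : w j < w j') :
    (univ.filter (fun i => w i ≤ w j)).card < (univ.filter (fun i => w i ≤ w j')).card := by
  refine Finset.card_lt_card ⟨?_, ?_⟩
  · intro i hi
    simp only [mem_filter, mem_univ, true_and] at hi ⊢
    exact hi.trans h.le
  · intro hsub
    have := hsub (by simp : j' ∈ univ.filter (fun i => w i ≤ w j'))
    simp only [mem_filter, mem_univ, true_and] at this
    exact absurd this (not_le.mpr h)

lemma card_cnt_le {m t : ℕ} {w : Fin m → ℝ} (hw : Function.Injective w) :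
    (univ.filter (fun j : Fin m => (univ.filter (fun i => w i ≤ w j)).card ≤ t)).card ≤ t := by
  classical
  have h := Finset.card_le_card_of_injOn
    (s := univ.filter (fun j : Fin m => (univ.filter (fun i => w i ≤ w j)).card ≤ t))
    (f := fun j : Fin m => (univ.filter (fun i => w i ≤ w j)).card)
    (t := Finset.Icc 1 t) ?_ ?_
  · simpa using h
  · intro j hj
    simp only [Finset.mem_coe, mem_filter, mem_univ, true_and] at hj
    simp only [Finset.mem_coe, Finset.mem_Icc]
    refine ⟨Finset.card_pos.mpr ⟨j, by simp⟩, hj⟩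
  · intro j hj j' hj' heq
    by_contra hne
    have hwne : w j ≠ w j' := fun hh => hne (hw hh)
    rcases lt_or_gt_of_ne hwne with hlt | hgt
    · exact absurd heq (Nat.ne_of_lt (cnt_lt_cnt hlt))
    · exact absurd heq.symm (Nat.ne_of_lt (cnt_lt_cnt hgt))

lemma measurable_cnt_set {p : ℕ} (j0 : Fin p) (r : ℕ) :
    MeasurableSet {u : Fin p → ℝ | (univ.filter (fun i => u i ≤ u j0)).card ≤ r} := by
  have hmeas : Measurable (fun u : Fin p → ℝ => (univ.filter (fun i => u i ≤ u j0)).card) := by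
    have : (fun u : Fin p → ℝ => (univ.filter (fun i => u i ≤ u j0)).card)
        = fun u => ∑ i : Fin p, if u i ≤ u j0 then 1 else 0 := by
      funext u
      rw [Finset.sum_boole]
      simp
    rw [this]
    refine Finset.measurable_sum _ (fun i _ => ?_)
    exact Measurable.ite (measurableSet_le (measurable_pi_apply i) (measurable_pi_apply j0))
      measurable_const measurable_const
  exact hmeas (by trivial : MeasurableSet {t : ℕ | t ≤ r})

lemma dTV_nonneg {Ω γ : Type*} [MeasurableSpace Ω] [MeasurableSpace γ]
    (P : Measure Ω) (U V : Ω → γ) : 0 ≤ dTV P U V :=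
  Real.iSup_nonneg (fun _ => abs_nonneg _)

lemma le_dTV {Ω γ : Type*} [MeasurableSpace Ω] [MeasurableSpace γ]
    (P : Measure Ω) [IsProbabilityMeasure P] (U V : Ω → γ) {E : Set γ} (hE : MeasurableSet E) :
    (P (U ⁻¹' E)).toReal ≤ (P (V ⁻¹' E)).toReal + dTV P U V := by
  have hbdd : BddAbove (Set.range (fun E : {E : Set γ // MeasurableSet E} =>
      |(P (U ⁻¹' E.1)).toReal - (P (V ⁻¹' E.1)).toReal|)) := by
    refine ⟨1, ?_⟩
    rintro y ⟨F, rfl⟩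
    have h1 : (P (U ⁻¹' F.1)).toReal ≤ 1 := by
      simpa using ENNReal.toReal_mono ENNReal.one_ne_top (prob_le_one (μ := P))
    have h2 : (P (V ⁻¹' F.1)).toReal ≤ 1 := by
      simpa using ENNReal.toReal_mono ENNReal.one_ne_top (prob_le_one (μ := P))
    have h3 : (0:ℝ) ≤ (P (U ⁻¹' F.1)).toReal := ENNReal.toReal_nonneg
    have h4 : (0:ℝ) ≤ (P (V ⁻¹' F.1)).toReal := ENNReal.toReal_nonneg
    rw [abs_sub_le_iff]
    constructor <;> linarith
  have h := le_ciSup hbdd ⟨E, hE⟩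
  have habs : (P (U ⁻¹' E)).toReal - (P (V ⁻¹' E)).toReal
      ≤ |(P (U ⁻¹' E)).toReal - (P (V ⁻¹' E)).toReal| := le_abs_self _
  rw [dTV]
  linarith [le_trans habs h]

open Finset in
lemma main_bound {Ω : Type*} [MeasurableSpace Ω] (P : Measure Ω) [IsProbabilityMeasure P]
    {N : ℕ} (hN : 1 ≤ N)
    (S : Ω → Fin (N + 1) → ℝ) (hSmeas : Measurable S)
    (hdist : ∀ᵐ ω ∂P, Function.Injective (S ω))
    (r τ : ℕ) (hr1 : 1 ≤ r) (hrN : r ≤ N) (hτ : τ ≤ N) :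
    (P {ω | S ω (Fin.last N) ≤ orderStat (fun j : Fin N => S ω j.castSucc) r}).toReal
      ≤ ((r : ℝ) + τ) / (N + 1) + avgSwitchCoef P S τ := by
  classical
  have hNull : P {ω | ¬ Function.Injective (S ω)} = 0 := ae_iff.mp hdist
  set t := r + τ with ht
  set Ev := {ω | S ω (Fin.last N) ≤ orderStat (fun j : Fin N => S ω j.castSucc) r} with hEv
  set C := {ω | (univ.filter (fun i => S ω i ≤ S ω (Fin.last N))).card ≤ r} with hC
  -- Step A
  have hstepA : Ev ⊆ C ∪ {ω | ¬ Function.Injective (S ω)} := by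
    intro ω hω
    by_cases hinj : Function.Injective (S ω)
    · left
      have h1 := card_lt_of_le_orderStat hr1 hrN hω
      have claim1 : (univ.filter (fun i : Fin (N+1) => S ω i ≤ S ω (Fin.last N))).card
          = (univ.filter (fun j : Fin N => S ω j.castSucc ≤ S ω (Fin.last N))).card + 1 := by
        rw [Finset.card_filter, Finset.card_filter, Fin.sum_univ_castSucc]
        simp
      have claim2 : (univ.filter (fun j : Fin N => S ω j.castSucc ≤ S ω (Fin.last N)))
          = (univ.filter (fun j : Fin N => S ω j.castSucc < S ω (Fin.last N))) := by
        refine Finset.filter_congr (fun j _ => ?_)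
        constructor
        · intro hle
          refine lt_of_le_of_ne hle (fun heq => ?_)
          have h2 := hinj heq
          have h3 := congrArg Fin.val h2
          simp [Fin.last] at h3
          have := j.isLt
          omega
        · exact le_of_lt
      simp only [hC, Set.mem_setOf_eq]
      rw [claim1, claim2]
      omega
    · right; exact hinj
  -- target set
  have hidxlt : ∀ j : ℕ, min j N < N + 1 := fun j => by omega
  have hlastτlt : N + 1 - τ - 1 < N + 1 - τ := by omega
  set lastτ : Fin (N + 1 - τ) := ⟨N + 1 - τ - 1, hlastτlt⟩ with hlastτ
  set Er := {u : Fin (N + 1 - τ) → ℝ | (univ.filter (fun i => u i ≤ u lastτ)).card ≤ r} with hEr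
  -- G sets
  set G : ℕ → Set Ω := fun j =>
    S ⁻¹' {u : Fin (N + 1) → ℝ | (univ.filter (fun i => u i ≤ u ⟨min j N, hidxlt j⟩)).card ≤ t}
    with hG
  have hGmeas : ∀ j, MeasurableSet (G j) :=
    fun j => hSmeas (measurable_cnt_set (⟨min j N, hidxlt j⟩ : Fin (N+1)) t)
  -- per-k bound
  have hper : ∀ k ∈ Finset.Icc 1 (N + 1),
      (P Ev).toReal ≤ (P (G (k-1))).toReal + switchCoef P S k τ := by
    intro k hk
    rw [Finset.mem_Icc] at hk
    obtain ⟨hk1, hk2⟩ := hk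
    have hstepB : C ⊆ (fun ω => delta0 (N+1) k τ (S ω)) ⁻¹' Er := by
      intro ω hω
      simp only [hC, Set.mem_setOf_eq] at hω
      simp only [Set.mem_preimage, hEr, Set.mem_setOf_eq]
      rw [delta0_eq_s13]
      simp only [Function.comp_apply]
      have hlast0 : iota0 (N+1) k τ lastτ = Fin.last N := by
        rw [hlastτ, iota0_last (N+1) k τ hk1 (by omega)]
        exact Fin.ext (by show N + 1 - 1 = N; omega)
      simp only [hlast0]
      exact le_trans (cardA _ (iota0_inj (N+1) k τ) (S ω) _) hω
    have hstepC : (fun ω => delta1 (N+1) k τ (S ω)) ⁻¹' Er ⊆ G (k-1) := by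
      intro ω hω
      simp only [Set.mem_preimage, hEr, Set.mem_setOf_eq] at hω
      rw [delta1_eq] at hω
      simp only [Function.comp_apply] at hω
      have hlast1 : iota1 (N+1) k τ lastτ = ⟨min (k-1) N, hidxlt (k-1)⟩ := by
        rw [hlastτ, iota1_last (N+1) k τ hk1 hk2 (by omega)]
        exact Fin.ext (by show k - 1 = min (k-1) N; omega)
      simp only [hlast1] at hω
      simp only [hG, Set.mem_preimage, Set.mem_setOf_eq]
      have hB := cardB _ (iota1_inj (N+1) k τ hk2) (S ω) (S ω ⟨min (k-1) N, hidxlt (k-1)⟩)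
      have hmm : (N + 1) - (N + 1 - τ) = τ := by omega
      rw [hmm] at hB
      exact le_trans hB (by omega)
    have h0 : P Ev ≤ P C := by
      calc P Ev ≤ P (C ∪ {ω | ¬ Function.Injective (S ω)}) := measure_mono hstepA
        _ ≤ P C + P {ω | ¬ Function.Injective (S ω)} := measure_union_le _ _
        _ = P C := by rw [hNull, add_zero]
    have h1 : (P Ev).toReal ≤ (P ((fun ω => delta0 (N+1) k τ (S ω)) ⁻¹' Er)).toReal :=
      ENNReal.toReal_mono (measure_ne_top P _) (h0.trans (measure_mono hstepB))
    have h2 : (P ((fun ω => delta0 (N+1) k τ (S ω)) ⁻¹' Er)).toReal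
        ≤ (P ((fun ω => delta1 (N+1) k τ (S ω)) ⁻¹' Er)).toReal + switchCoef P S k τ :=
      le_dTV P _ _ (measurable_cnt_set lastτ r)
    have h3 : (P ((fun ω => delta1 (N+1) k τ (S ω)) ⁻¹' Er)).toReal ≤ (P (G (k-1))).toReal :=
      ENNReal.toReal_mono (measure_ne_top P _) (measure_mono hstepC)
    linarith
  -- sum of G probabilities
  have hGsum : ∑ i ∈ Finset.range (N+1), (P (G i)).toReal ≤ (t : ℝ) := by
    have hsum : ∑ i ∈ Finset.range (N+1), P (G i) ≤ ((t : ℕ) : ℝ≥0∞) := by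
      have e1 : ∀ i ∈ Finset.range (N+1), P (G i)
          = ∫⁻ ω, (G i).indicator (fun _ => (1:ℝ≥0∞)) ω ∂P := by
        intro i _
        rw [lintegral_indicator_const (hGmeas i), one_mul]
      rw [Finset.sum_congr rfl e1, ← lintegral_finset_sum _
        (fun i _ => (measurable_const.indicator (hGmeas i)))]
      have e2 : ∫⁻ (ω:Ω), ((t:ℕ) : ℝ≥0∞) ∂P = ((t:ℕ) : ℝ≥0∞) := by
        simp
      rw [← e2]
      refine lintegral_mono_ae ?_
      filter_upwards [hdist] with ω hinj
      have e3 : ∀ i ∈ Finset.range (N+1),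
          (G i).indicator (fun _ => (1:ℝ≥0∞)) ω
            = if (univ.filter (fun i' => S ω i' ≤ S ω ⟨min i N, hidxlt i⟩)).card ≤ t
              then (1:ℝ≥0∞) else 0 := by
        intro i _
        rw [Set.indicator_apply]
        exact if_congr Iff.rfl rfl rfl
      rw [Finset.sum_congr rfl e3]
      have e4 : ∑ i ∈ Finset.range (N+1),
          (if (univ.filter (fun i' => S ω i' ≤ S ω ⟨min i N, hidxlt i⟩)).card ≤ t
              then (1:ℝ≥0∞) else 0)
          = ∑ j : Fin (N+1),
          (if (univ.filter (fun i' => S ω i' ≤ S ω j)).card ≤ t then (1:ℝ≥0∞) else 0) := by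
        rw [Finset.sum_range]
        refine Finset.sum_congr rfl (fun j _ => ?_)
        have hj : (⟨min (j:ℕ) N, hidxlt (j:ℕ)⟩ : Fin (N+1)) = j := by
          refine Fin.ext ?_
          show min (j:ℕ) N = (j:ℕ)
          have := j.isLt
          omega
        rw [hj]
      rw [e4, Finset.sum_boole]
      have e5 := card_cnt_le (t := t) hinj
      exact_mod_cast Nat.cast_le.mpr e5
    calc ∑ i ∈ Finset.range (N+1), (P (G i)).toReal
        = (∑ i ∈ Finset.range (N+1), P (G i)).toReal := by
          rw [ENNReal.toReal_sum (fun i _ => measure_ne_top P _)]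
      _ ≤ ((t:ℕ) : ℝ≥0∞).toReal := ENNReal.toReal_mono (by simp) hsum
      _ = (t : ℝ) := by simp
  -- reindex Icc sum
  have hreindex : ∑ k ∈ Finset.Icc 1 (N+1), (P (G (k-1))).toReal
      = ∑ i ∈ Finset.range (N+1), (P (G i)).toReal := by
    have h' : Finset.Icc 1 (N+1) = Finset.Ico 1 (N+2) := by
      exact (Finset.Ico_add_one_right_eq_Icc (a := 1) (b := N + 1)).symm
    rw [h', Finset.sum_Ico_eq_sum_range]
    have h'' : N + 2 - 1 = N + 1 := rfl
    rw [h'']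
    refine Finset.sum_congr rfl (fun i _ => ?_)
    have h3 : 1 + i - 1 = i := by omega
    rw [h3]
  -- combine
  have hcard : (Finset.Icc 1 (N+1)).card = N + 1 := by
    rw [Nat.card_Icc]
    omega
  have hsum2 : ((N:ℝ) + 1) * (P Ev).toReal
      ≤ (t : ℝ) + ∑ k ∈ Finset.Icc 1 (N+1), switchCoef P S k τ := by
    have := Finset.sum_le_sum hper
    rw [Finset.sum_const, hcard, Finset.sum_add_distrib, hreindex] at this
    have hc : ((N+1 : ℕ) : ℝ) = (N:ℝ) + 1 := by push_cast; ring
    rw [nsmul_eq_mul, hc] at this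
    linarith
  have hpos : (0:ℝ) < (N:ℝ) + 1 := by positivity
  have hfin : (P Ev).toReal ≤ ((t:ℝ) + ∑ k ∈ Finset.Icc 1 (N+1), switchCoef P S k τ) / ((N:ℝ)+1) := by
    rw [le_div_iff₀ hpos]
    linarith
  refine le_trans hfin ?_
  rw [avgSwitchCoef, add_div]
  have hc : ((N+1 : ℕ) : ℝ) = (N:ℝ) + 1 := by push_cast; ring
  rw [hc]
  apply add_le_add
  · rw [ht]; push_cast; exact le_refl _
  · exact le_refl _

/-- Theorem 3: overcoverage upper bound under almost-surely distinct scores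
(stated for each `τ`, equivalent to the `min` over `τ`). -/
theorem stmt13 {Ω α : Type*} [MeasurableSpace Ω] [MeasurableSpace α]
    (P : Measure Ω) [IsProbabilityMeasure P] {n L : ℕ} (hL : L < n)
    (Z : Ω → Fin (n + 1) → α) (hZ : Measurable Z)
    (s : (Fin (L + 1) → α) → ℝ) (hs : Measurable s)
    (hdist : ∀ᵐ ω ∂P, Function.Injective (fun j : Fin (n - L + 1) =>
        s fun l : Fin (L + 1) => Z ω ⟨L + j.val - l.val, by have := j.isLt; omega⟩))
    (a : ℝ) (ha : 0 < a) (ha1 : a < 1) (τ : ℕ) (hτ : τ ≤ n - L) :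
    (P {ω | (s (fun l : Fin (L + 1) => Z ω ⟨n - l.val, by omega⟩) : EReal)
          ≤ Quantile ((1 - a) * (1 + 1 / ((n : ℝ) - L)))
              (fun j : Fin (n - L) =>
                s fun l : Fin (L + 1) =>
                  Z ω ⟨L + j.val - l.val, by have := j.isLt; omega⟩)}).toReal
      ≤ ((⌈(1 - a) * ((n : ℝ) - L + 1)⌉ : ℤ) : ℝ) / ((n : ℝ) - L + 1)
        + ((τ : ℝ) / ((n : ℝ) - L + 1)
          + avgSwitchCoef P (fun ω (j : Fin (n - L + 1)) =>
              s fun l : Fin (L + 1) =>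
                Z ω ⟨L + j.val - l.val, by have := j.isLt; omega⟩) τ) := by
  classical
  have hnL : (0:ℝ) < (n:ℝ) - L := by
    have h : (L:ℝ) < (n:ℝ) := by exact_mod_cast hL
    linarith
  have h1a : (0:ℝ) < 1 - a := by linarith
  set b := (1 - a) * (1 + 1 / ((n : ℝ) - L)) with hb
  have hb0 : 0 < b := by
    have h2 : (0:ℝ) < 1 + 1 / ((n:ℝ) - L) := by positivity
    positivity
  set c : ℤ := ⌈(1 - a) * ((n : ℝ) - L + 1)⌉ with hc
  have hcastNL : ((n - L : ℕ) : ℝ) = (n:ℝ) - L := by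
    push_cast [Nat.cast_sub hL.le]; ring
  have hkey : b * ((n - L : ℕ) : ℝ) = (1 - a) * ((n:ℝ) - L + 1) := by
    rw [hcastNL, hb]
    field_simp
  have hc1 : 1 ≤ c := by
    rw [hc]
    exact Int.ceil_pos.mpr (by positivity)
  set S : Ω → Fin (n - L + 1) → ℝ := fun ω j =>
    s fun l : Fin (L + 1) => Z ω ⟨L + j.val - l.val, by have := j.isLt; omega⟩ with hS
  have hSmeas : Measurable S :=
    measurable_pi_lambda S (fun j =>
      hs.comp (measurable_pi_lambda _ (fun l => (measurable_pi_apply _).comp hZ)))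
  have hΨ : 0 ≤ avgSwitchCoef P S τ := by
    rw [avgSwitchCoef]
    apply div_nonneg
    · exact Finset.sum_nonneg (fun k _ => dTV_nonneg _ _ _)
    · positivity
  have hτ0 : 0 ≤ (τ:ℝ) / ((n:ℝ) - L + 1) := by positivity
  by_cases hbt : b > 1
  · -- trivial case: quantile is ⊤
    have hset : {ω | (s (fun l : Fin (L + 1) => Z ω ⟨n - l.val, by omega⟩) : EReal)
          ≤ Quantile b (fun j : Fin (n - L) =>
              s fun l : Fin (L + 1) => Z ω ⟨L + j.val - l.val, by have := j.isLt; omega⟩)}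
        = Set.univ := by
      ext ω
      simp [Quantile, hbt]
    rw [hset, measure_univ, ENNReal.toReal_one]
    have hcm : ((n:ℝ) - L + 1) ≤ (c:ℝ) := by
      have h2 : ((n:ℝ) - L) < (1 - a) * ((n:ℝ) - L + 1) := by
        have h3 : b * ((n:ℝ) - L) > 1 * ((n:ℝ) - L) := by
          exact (mul_lt_mul_of_pos_right hbt hnL)
        have hkey' := hkey
        rw [hcastNL] at hkey'
        linarith
      have h4 : ((n - L : ℕ) : ℤ) < c := by
        rw [hc]
        rw [Int.lt_ceil]
        push_cast
        rw [hcastNL]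
        exact h2
      have h5 : ((n - L : ℕ) : ℤ) + 1 ≤ c := h4
      have h6 : (((n - L : ℕ) : ℤ) : ℝ) + 1 ≤ (c:ℝ) := by exact_mod_cast h5
      push_cast at h6
      rw [hcastNL] at h6
      exact h6
    have hfrac : 1 ≤ (c:ℝ) / ((n:ℝ) - L + 1) := by
      rw [le_div_iff₀ (by linarith)]
      linarith
    linarith
  · -- main case
    have hble : b ≤ 1 := not_lt.mp hbt
    set r := c.toNat with hr
    have hrc : ((r : ℕ) : ℝ) = (c : ℝ) := by
      rw [hr]
      exact_mod_cast congrArg (Int.cast : ℤ → ℝ) (Int.toNat_of_nonneg (by omega))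
    have hr1 : 1 ≤ r := by omega
    have hrN : r ≤ n - L := by
      have h2 : c ≤ ((n - L : ℕ) : ℤ) := by
        rw [hc]
        apply Int.ceil_le.mpr
        push_cast
        rw [← hkey]
        have h7 : (0:ℝ) ≤ ((n - L : ℕ) : ℝ) := by positivity
        nlinarith [hble, h7]
      omega
    have hN1 : 1 ≤ n - L := by omega
    have hQ : ∀ v : Fin (n - L) → ℝ, Quantile b v = ((orderStat v r : ℝ) : EReal) := by
      intro v
      rw [Quantile, if_neg hbt, if_neg (not_le.mpr hb0)]
      congr 1
      rw [hkey, ← hc, hr]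
    have hEvEq : {ω | (s (fun l : Fin (L + 1) => Z ω ⟨n - l.val, by omega⟩) : EReal)
          ≤ Quantile b (fun j : Fin (n - L) =>
              s fun l : Fin (L + 1) => Z ω ⟨L + j.val - l.val, by have := j.isLt; omega⟩)}
        = {ω | S ω (Fin.last (n - L))
            ≤ orderStat (fun j : Fin (n - L) => S ω j.castSucc) r} := by
      ext ω
      simp only [Set.mem_setOf_eq]
      rw [hQ, EReal.coe_le_coe_iff]
      have hlast : s (fun l : Fin (L + 1) => Z ω ⟨n - l.val, by omega⟩)
          = S ω (Fin.last (n - L)) := by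
        rw [hS]
        apply congrArg s
        funext l
        apply congrArg (Z ω)
        apply Fin.ext
        show n - l.val = L + (n - L) - l.val
        omega
      rw [hlast]
      exact Iff.rfl
    rw [hEvEq]
    have hmb := main_bound P hN1 S hSmeas hdist r τ hr1 hrN hτ
    refine le_trans hmb (le_of_eq ?_)
    have hD : ((n - L : ℕ) : ℝ) + 1 = (n:ℝ) - L + 1 := by rw [hcastNL]
    rw [hD, hrc, add_div]
    ring
end
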